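/- arXiv:1202.2650 — 4 statements merged into one kernel-verified Lean document; each statement's English description precedes it below -/
import Mathlib

section
/- If a set family F on a set X has VC dimension at most d (no subset of X of size d+1 is shattered by F), then the dual VC dimension (co-dimension) of F is strictly less than 2^(d+1); i.e., there do not exist sets S_1, ..., S_n in F with n = 2^(d+1) such that for every subset u of {1,...,n} there is a point b_u in X with b_u ∈ S_i if and only if i ∈ u. -/
/-- `A` is shattered by the family `F`. -/
def ShatteredBy {X : Type*} (F : Set (Set X)) (A : Finset X) : Prop :=
  ∀ A' ⊆ A, ∃ S ∈ F, ∀ x ∈ A, (x ∈ S ↔ x ∈ A')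

/-- If no subset of size `d+1` is shattered by `F`, then there is no dual shattering
witness of length `2^(d+1)`: the dual VC dimension is `< 2^(d+1)`. -/
theorem dualVC_lt_two_pow {X : Type*} (F : Set (Set X)) (d : ℕ)
    (h : ∀ A : Finset X, A.card = d + 1 → ¬ ShatteredBy F A) :
    ¬ ∃ S : Fin (2 ^ (d + 1)) → Set X, (∀ i, S i ∈ F) ∧
      ∀ u : Set (Fin (2 ^ (d + 1))), ∃ b : X, ∀ i, b ∈ S i ↔ i ∈ u := by
  classical
  rintro ⟨S, hSF, hdual⟩
  -- identify indices with subsets of `Fin (d+1)`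
  have hcard : Fintype.card (Set (Fin (d + 1))) = 2 ^ (d + 1) := by
    simp [Fintype.card_set]
  let e : Set (Fin (d + 1)) ≃ Fin (2 ^ (d + 1)) :=
    (Fintype.equivFinOfCardEq hcard)
  -- choose points realizing each "column" pattern
  have hb : ∀ j : Fin (d + 1), ∃ b : X, ∀ T : Set (Fin (d + 1)),
      b ∈ S (e T) ↔ j ∈ T := by
    intro j
    obtain ⟨b, hbb⟩ := hdual {i | j ∈ e.symm i}
    exact ⟨b, fun T => by simpa using hbb (e T)⟩
  choose b hbspec using hb
  have hinj : Function.Injective b := by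
    intro j k hjk
    have h1 : b j ∈ S (e ({j} : Set (Fin (d + 1)))) := (hbspec j {j}).2 rfl
    have h2 := (hbspec k ({j} : Set (Fin (d + 1)))).1 (hjk ▸ h1)
    exact (h2.symm : j = k) ▸ rfl
  set A : Finset X := Finset.image b Finset.univ with hA
  have hcardA : A.card = d + 1 := by
    rw [hA, Finset.card_image_of_injective _ hinj, Finset.card_univ, Fintype.card_fin]
  refine h A hcardA ?_
  intro A' hA'
  refine ⟨S (e {j | b j ∈ A'}), hSF _, ?_⟩
  intro x hx
  rw [hA, Finset.mem_image] at hx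
  obtain ⟨j, -, rfl⟩ := hx
  rw [hbspec j]
  constructor
  · intro hj
    exact hj
  · intro hj
    exact hj
end

section
/- (Sauer–Shelah) If a family F of subsets of a finite set A of size m has VC dimension at most k, then the number of distinct traces {S ∩ A : S ∈ F} is at most the sum over i from 0 to k of binomial(m, i); in particular it is at most (m+1)^k. -/
open Finset

private lemma sum_choose_le_pow (m k : ℕ) :
    ∑ i ∈ Finset.range (k + 1), m.choose i ≤ (m + 1) ^ k := by
  induction k with
  | zero => simp
  | succ k ih =>
    rw [Finset.sum_range_succ, pow_succ]
    calc ∑ i ∈ Finset.range (k + 1), m.choose i + m.choose (k + 1)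
        ≤ (m + 1) ^ k + m * (m + 1) ^ k := by
          refine Nat.add_le_add ih ?_
          calc m.choose (k + 1) ≤ m ^ (k + 1) := Nat.choose_le_pow m (k + 1)
            _ = m * m ^ k := by ring
            _ ≤ m * (m + 1) ^ k :=
              Nat.mul_le_mul_left m (Nat.pow_le_pow_left (Nat.le_succ m) k)
      _ = (m + 1) ^ k * (m + 1) := by ring

/-- Sauer–Shelah: if a family `F` of subsets of a finite set `A` of size `m` has VC
dimension at most `k` (no subset of size `k+1` is shattered), then the number of traces
`{S ∩ A : S ∈ F}` is at most `∑_{i ≤ k} C(m, i)`, and in particular at most `(m+1)^k`. -/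
theorem sauer_shelah {X : Type*} (F : Set (Set X)) (A : Finset X) (k : ℕ)
    (h : ∀ B : Finset X, B ⊆ A → B.card = k + 1 →
      ¬ (∀ B' ⊆ B, ∃ S ∈ F, ∀ x ∈ B, (x ∈ S ↔ x ∈ B'))) :
    {t : Set X | ∃ S ∈ F, t = S ∩ (A : Set X)}.ncard ≤
        ∑ i ∈ Finset.range (k + 1), (A.card).choose i ∧
      {t : Set X | ∃ S ∈ F, t = S ∩ (A : Set X)}.ncard ≤ (A.card + 1) ^ k := by
  classical
  set α := {x // x ∈ A}
  -- the family of traces as finsets of the subtype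
  set 𝒜 : Finset (Finset α) :=
    Finset.univ.filter (fun s => ∃ S ∈ F, ∀ x : α, x ∈ s ↔ (x : X) ∈ S) with h𝒜
  have hmem : ∀ s : Finset α, s ∈ 𝒜 ↔ ∃ S ∈ F, ∀ x : α, x ∈ s ↔ (x : X) ∈ S := by
    intro s; simp [h𝒜]
  -- Step 1: trace set ncard ≤ #𝒜
  have step1 : {t : Set X | ∃ S ∈ F, t = S ∩ (A : Set X)}.ncard ≤ 𝒜.card := by
    set g : Finset α → Set X := fun s => {x | ∃ hx : x ∈ A, (⟨x, hx⟩ : α) ∈ s} with hg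
    have hsub : {t : Set X | ∃ S ∈ F, t = S ∩ (A : Set X)} ⊆ g '' ↑𝒜 := by
      rintro t ⟨S, hS, rfl⟩
      refine ⟨A.attach.filter (fun x => (x : X) ∈ S), ?_, ?_⟩
      · rw [Finset.mem_coe, hmem]
        refine ⟨S, hS, fun x => ?_⟩
        rw [Finset.mem_filter]
        exact ⟨fun hx => hx.2, fun hx => ⟨A.mem_attach x, hx⟩⟩
      · ext x
        constructor
        · rintro ⟨hx, hxs⟩
          simp only [Finset.mem_filter] at hxs
          exact ⟨hxs.2, hx⟩
        · rintro ⟨hxS, hxA⟩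
          exact ⟨hxA, by simp [hxS]⟩
    calc {t : Set X | ∃ S ∈ F, t = S ∩ (A : Set X)}.ncard
        ≤ (g '' ↑𝒜).ncard :=
          Set.ncard_le_ncard hsub ((𝒜.finite_toSet).image g)
      _ ≤ (↑𝒜 : Set (Finset α)).ncard := Set.ncard_image_le 𝒜.finite_toSet
      _ = 𝒜.card := Set.ncard_coe_finset 𝒜
  -- Step 2: vcDim 𝒜 ≤ k
  have hvc : 𝒜.vcDim ≤ k := by
    unfold Finset.vcDim
    refine Finset.sup_le fun s hs => ?_
    rw [Finset.mem_shatterer] at hs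
    by_contra hsk
    push_neg at hsk
    obtain ⟨s', hs's, hs'card⟩ := Finset.exists_subset_card_eq (n := k+1) (by omega) (s := s)
    have hsh : 𝒜.Shatters s' := hs.mono_right hs's
    set B : Finset X := s'.image Subtype.val with hB
    have hBcard : B.card = k + 1 := by
      rw [hB, Finset.card_image_of_injective _ Subtype.coe_injective, hs'card]
    refine h B ?_ hBcard ?_
    · intro x hx
      rw [hB] at hx
      obtain ⟨y, _, rfl⟩ := Finset.mem_image.1 hx
      exact y.2
    · intro B' hB'
      obtain ⟨u, hu, hsu⟩ := hsh (t := s'.filter (fun x => (x : X) ∈ B'))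
        (Finset.filter_subset _ _)
      obtain ⟨S, hS, hSu⟩ := (hmem u).1 hu
      refine ⟨S, hS, ?_⟩
      intro x hx
      rw [hB] at hx
      obtain ⟨y, hy, rfl⟩ := Finset.mem_image.1 hx
      have h2 := Finset.ext_iff.1 hsu y
      simp only [Finset.mem_inter, Finset.mem_filter, hy, true_and] at h2
      rw [← hSu y]
      exact h2
  -- Step 3: combine with Mathlib's Sauer–Shelah
  have step3 : 𝒜.card ≤ ∑ i ∈ Finset.range (k + 1), (A.card).choose i := by
    have h1 : 𝒜.card ≤ 𝒜.shatterer.card := Finset.card_le_card_shatterer 𝒜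
    have h2 := Finset.card_shatterer_le_sum_vcDim (𝒜 := 𝒜)
    have h3 : ∑ i ∈ Finset.Iic 𝒜.vcDim, (Fintype.card α).choose i
        ≤ ∑ i ∈ Finset.range (k + 1), (Fintype.card α).choose i := by
      apply Finset.sum_le_sum_of_subset
      intro i hi
      rw [Finset.mem_Iic] at hi
      rw [Finset.mem_range]
      omega
    have hcard : Fintype.card α = A.card := Fintype.card_coe A
    rw [hcard] at h2 h3
    exact le_trans h1 (le_trans h2 h3)
  have main := le_trans step1 step3
  exact ⟨main, le_trans main (sum_choose_le_pow A.card k)⟩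
end

section
/- A family F of subsets of X has finite VC dimension if and only if it has finite dual VC dimension (co-dimension). -/
/-- A family has finite VC dimension iff it has finite dual VC dimension. -/
theorem finite_VC_iff_finite_dual_VC {X : Type*} (F : Set (Set X)) :
    (∃ d : ℕ, ∀ A : Finset X,
        (∀ A' ⊆ A, ∃ S ∈ F, ∀ x ∈ A, (x ∈ S ↔ x ∈ A')) → A.card ≤ d) ↔
    (∃ k : ℕ, ∀ n : ℕ, ∀ S : Fin n → Set X, (∀ i, S i ∈ F) →
        (∀ u : Set (Fin n), ∃ b : X, ∀ i, b ∈ S i ↔ i ∈ u) → n ≤ k) := by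
  classical
  constructor
  · rintro ⟨d, hd⟩
    refine ⟨2 ^ (d + 1) - 1, fun n S hSF hdual => ?_⟩
    by_contra hn
    push_neg at hn
    have hcard : 2 ^ (d + 1) ≤ n := by omega
    set m := d + 1 with hm
    -- embedding of boolean vectors into Fin n
    obtain ⟨f⟩ : Nonempty ((Fin m → Bool) ↪ Fin n) :=
      Function.Embedding.nonempty_of_card_le (by simpa using hcard)
    -- points realizing the patterns u_j
    have hpt : ∀ j : Fin m, ∃ b : X, ∀ w : Fin m → Bool,
        (b ∈ S (f w) ↔ w j = true) := by
      intro j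
      obtain ⟨b, hb⟩ := hdual {i | ∃ w, f w = i ∧ w j = true}
      refine ⟨b, fun w => ?_⟩
      rw [hb]
      constructor
      · rintro ⟨w', hw', hwj⟩
        rwa [← f.injective hw']
      · exact fun h => ⟨w, rfl, h⟩
    choose b hb using hpt
    have hbinj : Function.Injective b := by
      intro j j' hjj'
      by_contra hne
      have h1 : b j ∈ S (f (fun t => decide (t = j))) :=
        (hb j _).2 (by simp)
      rw [hjj'] at h1
      have h2 := (hb j' _).1 h1
      simp at h2
      exact hne h2.symm
    set A : Finset X := Finset.univ.image b with hA
    have hAcard : A.card = m := by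
      rw [hA, Finset.card_image_of_injective _ hbinj, Finset.card_univ, Fintype.card_fin]
    have := hd A ?_
    · omega
    · intro A' hA'
      set w : Fin m → Bool := fun j => decide (b j ∈ A') with hw
      refine ⟨S (f w), hSF _, fun x hx => ?_⟩
      rw [hA] at hx
      simp only [Finset.mem_image, Finset.mem_univ, true_and] at hx
      obtain ⟨j, rfl⟩ := hx
      rw [hb j w, hw]
      simp
  · rintro ⟨k, hk⟩
    refine ⟨2 ^ (k + 1) - 1, fun A hA => ?_⟩
    by_contra hn
    push_neg at hn
    have hcard : 2 ^ (k + 1) ≤ A.card := by omega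
    set m := k + 1 with hm
    obtain ⟨g⟩ : Nonempty ((Fin m → Bool) ↪ {x // x ∈ A}) :=
      Function.Embedding.nonempty_of_card_le (by simpa using hcard)
    have hset : ∀ j : Fin m, ∃ T ∈ F, ∀ w : Fin m → Bool,
        ((g w : X) ∈ T ↔ w j = true) := by
      intro j
      obtain ⟨T, hTF, hT⟩ := hA (A.filter (fun x => ∃ w, (g w : X) = x ∧ w j = true))
        (Finset.filter_subset _ _)
      refine ⟨T, hTF, fun w => ?_⟩
      rw [hT _ (g w).2, Finset.mem_filter]
      constructor
      · rintro ⟨-, w', hw', hwj⟩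
        have : g w' = g w := Subtype.ext hw'
        rwa [← g.injective this]
      · exact fun h => ⟨(g w).2, w, rfl, h⟩
    choose T hTF hT using hset
    have := hk m T hTF ?_
    · omega
    · intro u
      set w : Fin m → Bool := fun j => decide (j ∈ u) with hw
      refine ⟨(g w : X), fun j => ?_⟩
      rw [hT j w, hw]
      simp
end

section
/- Let G be an arbitrary countable graph on vertex set V. Then there exists a family of pairwise disjoint nonempty open intervals (with rational endpoints) {(a_e, b_e) : e ∈ E(G)} in ℚ, indexed by the edges of G, together with an assignment of two distinct dense subsets to the vertices, such that the edge relation of G is coded: concretely, there is an injection v ↦ D_v from V to a set of pairwise disjoint dense subsets of ℚ, and for each edge e = {u, w} a choice of points a_e ∈ D_u, b_e ∈ D_w with the intervals (a_e, b_e) pairwise disjoint. -/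
/-- Fibers of the "denominator is `2^n * 3^b`" condition are dense in `ℚ`. -/
lemma exists_rat_den_btwn (n : ℕ) {x y : ℚ} (hxy : x < y) :
    ∃ q : ℚ, (∃ b, q.den = 2 ^ n * 3 ^ b) ∧ x < q ∧ q < y := by
  obtain ⟨b, hb⟩ := pow_unbounded_of_one_lt (R := ℚ)
    (8 / ((y - x) * 2 ^ n)) (by norm_num : (1:ℚ) < 3)
  set K : ℕ := 2 ^ n * 3 ^ b with hKdef
  have hKQ : ((K : ℚ)) = 2 ^ n * 3 ^ b := by rw [hKdef]; push_cast; ring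
  have hK0 : (0:ℚ) < (K : ℚ) := by rw [hKQ]; positivity
  have hyx : (0:ℚ) < y - x := sub_pos.mpr hxy
  have h8 : 8 < (y - x) * K := by
    rw [div_lt_iff₀ (by positivity)] at hb
    rw [hKQ]
    calc (8:ℚ) < 3 ^ b * ((y - x) * 2 ^ n) := hb
      _ = (y - x) * (2 ^ n * 3 ^ b) := by ring
  set m : ℤ := ⌊x * K / 6⌋ + 1 with hm
  set a : ℤ := 6 * m + 1 with ha
  have h1 : x * K < (a : ℚ) := by
    have hlt := Int.lt_floor_add_one (x * K / 6)
    have h6 : x * K < 6 * (m : ℚ) := by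
      rw [hm]; push_cast; nlinarith [hlt]
    calc x * K < 6 * (m : ℚ) := h6
      _ ≤ (a : ℚ) := by rw [ha]; push_cast; linarith
  have h2 : (a : ℚ) < y * K := by
    have hfl := Int.floor_le (x * K / 6)
    have haq : (a : ℚ) = 6 * ((⌊x * K / 6⌋ : ℤ) : ℚ) + 7 := by
      rw [ha, hm]; push_cast; ring
    rw [haq]; nlinarith [hfl]
  have hc2 : Nat.Coprime a.natAbs 2 := (Nat.prime_two.coprime_iff_not_dvd.mpr (by omega)).symm
  have hc3 : Nat.Coprime a.natAbs 3 := (Nat.prime_three.coprime_iff_not_dvd.mpr (by omega)).symm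
  have hcop : a.natAbs.Coprime K := by
    rw [hKdef]; exact (hc2.pow_right n).mul_right (hc3.pow_right b)
  have hKne : K ≠ 0 := by positivity
  refine ⟨⟨a, K, hKne, hcop⟩, ⟨b, rfl⟩, ?_, ?_⟩ <;>
    rw [show ((⟨a, K, hKne, hcop⟩ : ℚ)) = (a : ℚ) / (K : ℚ) by
      rw [Rat.mk_eq_divInt, Rat.divInt_eq_div]; push_cast; ring]
  · rw [lt_div_iff₀ hK0]; linarith
  · rw [div_lt_iff₀ hK0]; linarith

lemma two_pow_mul_three_pow_inj {n m b c : ℕ} (h : 2 ^ n * 3 ^ b = 2 ^ m * 3 ^ c) :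
    n = m := by
  have h2 := congrArg (fun k => k.factorization 2) h
  simpa [Nat.factorization_mul, Nat.Prime.factorization, Nat.prime_two, Nat.prime_three,
    Finsupp.single_apply, pow_ne_zero] using h2


/-- Any countable graph can be coded by pairwise disjoint open rational intervals: there
are pairwise disjoint dense subsets `D v ⊆ ℚ` indexed injectively by the vertices, and
for each edge `e = {u, w}` a choice of endpoints `lo e ∈ D u`, `hi e ∈ D w` so that the
nonempty open intervals `(lo e, hi e)` are pairwise disjoint. -/
theorem countable_graph_coded_by_disjoint_intervals
    {V : Type} [Countable V] (G : SimpleGraph V) :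
    ∃ D : V → Set ℚ,
      (∀ v, ∀ a b : ℚ, a < b → ∃ q ∈ D v, a < q ∧ q < b) ∧
      Function.Injective D ∧
      (Pairwise fun u w => Disjoint (D u) (D w)) ∧
      ∃ lo hi : G.edgeSet → ℚ,
        (∀ e, lo e < hi e) ∧
        (∀ e : G.edgeSet, ∃ u w : V, (e : Sym2 V) = s(u, w) ∧ lo e ∈ D u ∧ hi e ∈ D w) ∧
        Pairwise fun e e' : G.edgeSet =>
          Disjoint (Set.Ioo (lo e) (hi e)) (Set.Ioo (lo e') (hi e')) := by

  obtain ⟨f, hf⟩ := exists_injective_nat V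
  set D : V → Set ℚ := fun v => {q | ∃ b, q.den = 2 ^ (f v) * 3 ^ b} with hD
  have hdense : ∀ v, ∀ a b : ℚ, a < b → ∃ q ∈ D v, a < q ∧ q < b := by
    intro v a b hab
    obtain ⟨q, hq, h1, h2⟩ := exists_rat_den_btwn (f v) hab
    exact ⟨q, hq, h1, h2⟩
  have hdisj : Pairwise fun u w => Disjoint (D u) (D w) := by
    intro u w huw
    rw [Set.disjoint_left]
    rintro q ⟨b, hb⟩ ⟨c, hc⟩
    exact hf.ne huw (two_pow_mul_three_pow_inj (hb ▸ hc))
  have hinj : Function.Injective D := by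
    intro u w h
    by_contra hne
    obtain ⟨q, hq, -, -⟩ := hdense u 0 1 one_pos
    exact Set.disjoint_left.mp (hdisj hne) hq (h ▸ hq)
  refine ⟨D, hdense, hinj, hdisj, ?_⟩
  obtain ⟨g, hg⟩ := exists_injective_nat G.edgeSet
  have hrep : ∀ z : Sym2 V, ∃ p : V × V, z = s(p.1, p.2) := fun z =>
    Sym2.inductionOn z fun u w => ⟨(u, w), rfl⟩
  choose p hp using fun e : G.edgeSet => hrep (e : Sym2 V)
  have hlo : ∀ e : G.edgeSet,
      ∃ q ∈ D (p e).1, (g e : ℚ) < q ∧ q < (g e : ℚ) + 1/4 :=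
    fun e => hdense _ _ _ (by linarith)
  have hhi : ∀ e : G.edgeSet,
      ∃ q ∈ D (p e).2, (g e : ℚ) + 1/4 < q ∧ q < (g e : ℚ) + 1/2 :=
    fun e => hdense _ _ _ (by linarith)
  choose lo hlo1 hlo2 hlo3 using hlo
  choose hi hhi1 hhi2 hhi3 using hhi
  refine ⟨lo, hi, fun e => lt_trans (hlo3 e) (hhi2 e),
    fun e => ⟨(p e).1, (p e).2, hp e, hlo1 e, hhi1 e⟩, ?_⟩
  intro e e' hne
  rw [Set.disjoint_left]
  rintro q ⟨hq1, hq2⟩ ⟨hq1', hq2'⟩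
  have a1 : (g e : ℚ) < q := lt_trans (hlo2 e) hq1
  have a2 : q < (g e : ℚ) + 1/2 := lt_trans hq2 (hhi3 e)
  have b1 : (g e' : ℚ) < q := lt_trans (hlo2 e') hq1'
  have b2 : q < (g e' : ℚ) + 1/2 := lt_trans hq2' (hhi3 e')
  rcases lt_or_gt_of_ne (hg.ne hne) with h | h
  · have : (g e : ℚ) + 1 ≤ (g e' : ℚ) := by exact_mod_cast Nat.succ_le_of_lt h
    linarith
  · have : (g e' : ℚ) + 1 ≤ (g e : ℚ) := by exact_mod_cast Nat.succ_le_of_lt h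
    linarith
end
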